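/- Fix n ∈ ℕ, α > 0, M > 0, λ ≥ 0, a symmetric matrix W ∈ ℝ^{n×n} (W_{ij} = W_{ji}), and vectors μ, f₀ ∈ ℝⁿ. Define E : ℝⁿ → ℝ by E(f) = (1/2)Σ_{i=1}^n (f_i − μ_i)² + (λ/2)Σ_{i=1}^n (f_i − (f₀)_i)² − (1/(4M)) Σ_{i,j=1}^n W_{ij} Σ_α(f_i − f_j). Then E is differentiable on ℝⁿ and for every f ∈ ℝⁿ and every k, its partial derivative is ∂E/∂f_k (f) = (1+λ) f_k − μ_k − λ (f₀)_k − (1/(2M)) Σ_{j=1}^n W_{kj} σ_α(f_k − f_j). Consequently the gradient descent of E is the discrete Wilson–Cowan-type equation ḟ_k = −(1+λ) f_k + μ_k + λ(f₀)_k + (1/(2M)) Σ_j W_{kj} σ_α(f_k − f_j). -/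

import Mathlib

open scoped BigOperators

/-- The piecewise affine sigmoid `σ_α(ρ) = min{1, max{αρ, -1}}`. -/
noncomputable def sigmoid (α : ℝ) (ρ : ℝ) : ℝ :=
  min 1 (max (α * ρ) (-1))

/-- The antiderivative `Σ_α(ρ) = ∫₀^ρ σ_α(s) ds` of the sigmoid vanishing at `0`. -/
noncomputable def sigmoidPrimitive (α : ℝ) (ρ : ℝ) : ℝ :=
  ∫ s in (0:ℝ)..ρ, sigmoid α s

/-- The discrete Wilson–Cowan energy
`E(f) = ½ Σᵢ (fᵢ - μᵢ)² + (λ/2) Σᵢ (fᵢ - (f₀)ᵢ)² - (1/(4M)) Σᵢⱼ Wᵢⱼ Σ_α(fᵢ - fⱼ)`. -/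
noncomputable def wcEnergy (n : ℕ) (α M lam : ℝ) (W : Fin n → Fin n → ℝ)
    (μ f₀ : Fin n → ℝ) (f : Fin n → ℝ) : ℝ :=
  (1/2) * ∑ i, (f i - μ i)^2 + (lam/2) * ∑ i, (f i - f₀ i)^2
    - (1/(4*M)) * ∑ i, ∑ j, W i j * sigmoidPrimitive α (f i - f j)

lemma sigmoid_cont (α : ℝ) : Continuous (sigmoid α) := by
  unfold sigmoid; fun_prop

lemma sigmoid_zero (α : ℝ) : sigmoid α 0 = 0 := by
  norm_num [sigmoid]

lemma sigmoid_neg (α x : ℝ) : sigmoid α (-x) = - sigmoid α x := by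
  simp only [sigmoid, mul_neg, min_def, max_def]
  split_ifs <;> linarith

lemma hasDerivAt_sigmoidPrimitive (α x : ℝ) :
    HasDerivAt (sigmoidPrimitive α) (sigmoid α x) x :=
  ((sigmoid_cont α).integral_hasStrictDerivAt 0 x).hasDerivAt

/-- The discrete Wilson–Cowan energy is differentiable and its `k`-th partial derivative
is `(1+λ) fₖ - μₖ - λ(f₀)ₖ - (1/(2M)) Σⱼ Wₖⱼ σ_α(fₖ - fⱼ)`; consequently its gradient
descent is the discrete Wilson–Cowan equation. -/
theorem wcEnergy_partial_deriv (n : ℕ) (α M lam : ℝ) (hα : 0 < α) (hM : 0 < M)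
    (hlam : 0 ≤ lam) (W : Fin n → Fin n → ℝ) (hW : ∀ i j, W i j = W j i)
    (μ f₀ : Fin n → ℝ) :
    Differentiable ℝ (wcEnergy n α M lam W μ f₀) ∧
    ∀ (f : Fin n → ℝ) (k : Fin n),
      HasDerivAt (fun t : ℝ => wcEnergy n α M lam W μ f₀ (Function.update f k t))
        ((1 + lam) * f k - μ k - lam * f₀ k
          - (1/(2*M)) * ∑ j, W k j * sigmoid α (f k - f j)) (f k) := by
  have hSig : Differentiable ℝ (sigmoidPrimitive α) :=
    fun x => (hasDerivAt_sigmoidPrimitive α x).differentiableAt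
  constructor
  · unfold wcEnergy
    fun_prop
  · intro f k
    -- derivative of each quadratic summand
    have q : ∀ (c : Fin n → ℝ) (i : Fin n),
        HasDerivAt (fun t => (Function.update f k t i - c i)^2)
          (if i = k then 2*(f k - c k) else 0) (f k) := by
      intro c i
      by_cases hi : i = k
      · subst hi
        simp only [Function.update_self, eq_self_iff_true, if_true]
        have := ((hasDerivAt_id (f i)).sub_const (c i)).fun_pow 2
        simpa using this
      · simp only [Function.update_of_ne hi, if_neg hi]
        exact hasDerivAt_const _ _
    -- derivative of each interaction summand
    have key : ∀ i j : Fin n,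
        HasDerivAt (fun t => W i j *
            sigmoidPrimitive α (Function.update f k t i - Function.update f k t j))
          ((if i = k then W k j * sigmoid α (f k - f j) else 0)
            + (if j = k then W i k * sigmoid α (f k - f i) else 0)) (f k) := by
      intro i j
      by_cases hi : i = k <;> by_cases hj : j = k
      · subst hi; subst hj
        simp only [Function.update_self, sub_self, eq_self_iff_true, if_true,
          sigmoid_zero, mul_zero, add_zero]
        exact hasDerivAt_const _ _
      · subst hi
        simp only [Function.update_self, Function.update_of_ne hj,
          eq_self_iff_true, if_true, if_neg hj, add_zero]
        have h := ((hasDerivAt_sigmoidPrimitive α (f i - f j)).comp (f i)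
          ((hasDerivAt_id (f i)).sub_const (f j))).const_mul (W i j)
        simpa using h
      · subst hj
        simp only [Function.update_self, Function.update_of_ne hi, if_neg hi,
          eq_self_iff_true, if_true, zero_add]
        have h := ((hasDerivAt_sigmoidPrimitive α (f i - f j)).comp (f j)
          ((hasDerivAt_const (f j) (f i)).sub (hasDerivAt_id (f j)))).const_mul (W i j)
        have e : f j - f i = -(f i - f j) := by ring
        refine h.congr_deriv ?_
        rw [e, sigmoid_neg]
        ring
      · simp only [Function.update_of_ne hi, Function.update_of_ne hj, if_neg hi,
          if_neg hj, add_zero]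
        exact hasDerivAt_const _ _
    have H : HasDerivAt (fun t : ℝ =>
        (1/2) * ∑ i, (Function.update f k t i - μ i)^2
          + (lam/2) * ∑ i, (Function.update f k t i - f₀ i)^2
          - (1/(4*M)) * ∑ i, ∑ j, W i j *
              sigmoidPrimitive α (Function.update f k t i - Function.update f k t j))
        ((1/2) * (∑ i : Fin n, if i = k then 2*(f k - μ k) else 0)
          + (lam/2) * (∑ i : Fin n, if i = k then 2*(f k - f₀ k) else 0)
          - (1/(4*M)) * ∑ i : Fin n, ∑ j : Fin n,
              ((if i = k then W k j * sigmoid α (f k - f j) else 0)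
                + (if j = k then W i k * sigmoid α (f k - f i) else 0))) (f k) :=
      (((HasDerivAt.fun_sum (fun i _ => q μ i)).const_mul (1/2 : ℝ)).add
        ((HasDerivAt.fun_sum (fun i _ => q f₀ i)).const_mul (lam/2))).sub
      ((HasDerivAt.fun_sum (fun i _ => HasDerivAt.fun_sum (fun j _ => key i j))).const_mul
        (1/(4*M)))
    have hsum1 : ∀ (c : ℝ), (∑ i : Fin n, if i = k then c else 0) = c := by
      intro c; simp
    have hsum3 : (∑ i : Fin n, ∑ j : Fin n,
        ((if i = k then W k j * sigmoid α (f k - f j) else 0)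
          + (if j = k then W i k * sigmoid α (f k - f i) else 0)))
        = 2 * ∑ j, W k j * sigmoid α (f k - f j) := by
      rw [Finset.sum_comm]
      simp only [Finset.sum_add_distrib]
      rw [Finset.sum_comm (f := fun j i => if j = k then W i k * sigmoid α (f k - f i) else 0)]
      simp only [Finset.sum_ite_eq', Finset.mem_univ, if_pos]
      have : ∀ i, W i k = W k i := fun i => hW i k
      simp only [this]
      ring
    unfold wcEnergy
    convert H using 1
    rw [hsum1, hsum1, hsum3]
    field_simp
    ring
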